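/- Let d ≥ 2, λ > 0, and p ≥ 1. If c is a constant such that ‖Exp^λ(x) − Exp^λ(y)‖_1 ≤ c · ‖x − y‖_p for all x, y ∈ ℝ^d, then c ≥ 2λ · d(d−1)/(2d−1)²; in particular c ≥ 4λ/9. -/

import Mathlib

open Finset

/-- The exponential soft-max mechanism with parameter `lam`. -/
noncomputable def expMech {d : ℕ} (lam : ℝ) (x : Fin d → ℝ) : Fin d → ℝ :=
  fun i => Real.exp (lam * x i) / ∑ j, Real.exp (lam * x j)

/-- The `ℓ_p` norm of a vector in `ℝ^d`. -/
noncomputable def pnorm {d : ℕ} (p : ℝ) (z : Fin d → ℝ) : ℝ :=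
  (∑ i, |z i| ^ p) ^ (1 / p)

/-- Any `(ℓ_p, ℓ_1)`-Lipschitz constant `c` for the exponential mechanism satisfies
`c ≥ 2λ·d(d−1)/(2d−1)²`; in particular `c ≥ 4λ/9`. -/
theorem exp_mech_l1_lipschitz_lower_bound (d : ℕ) (hd : 2 ≤ d) (lam p : ℝ)
    (hlam : 0 < lam) (hp : 1 ≤ p) (c : ℝ)
    (hlip : ∀ x y : Fin d → ℝ,
      ∑ i, |expMech lam x i - expMech lam y i| ≤ c * pnorm p (x - y)) :
    c ≥ 2 * lam * ((d : ℝ) * ((d : ℝ) - 1)) / (2 * (d : ℝ) - 1) ^ 2 ∧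
      c ≥ 4 * lam / 9 := by
  haveI : NeZero d := ⟨by omega⟩
  have hD2 : (2:ℝ) ≤ (d:ℝ) := by exact_mod_cast hd
  have hDpos : (0:ℝ) < (d:ℝ) := by linarith
  set D : ℝ := (d:ℝ) with hDdef
  set a : ℝ := Real.log D / lam with ha
  have hea : Real.exp (lam * a) = D := by
    rw [ha, mul_comm, div_mul_cancel₀ _ (ne_of_gt hlam)]
    exact Real.exp_log hDpos
  set xv : ℝ → Fin d → ℝ := fun t i => if i = 0 then a + t else 0 with hxv
  set S : ℝ → ℝ := fun t => D * Real.exp (lam * t) + (D - 1) with hSdef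
  have hSpos : ∀ t, 0 < S t := by
    intro t
    have := Real.exp_pos (lam * t)
    have : 0 < D * Real.exp (lam * t) := by positivity
    simp only [hSdef]; linarith
  have hS : ∀ t, ∑ j, Real.exp (lam * xv t j) = S t := by
    intro t
    have : ∀ j : Fin d, Real.exp (lam * xv t j)
        = (if j = 0 then D * Real.exp (lam * t) - 1 else 0) + 1 := by
      intro j
      simp only [hxv]
      split_ifs with h
      · rw [mul_add, Real.exp_add, hea]; ring
      · simp
    rw [Finset.sum_congr rfl fun j _ => this j, Finset.sum_add_distrib,
      Finset.sum_ite_eq' univ (0 : Fin d)]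
    simp [hSdef, Finset.card_univ]
    ring
  have hmech0 : ∀ t, expMech lam (xv t) 0 = D * Real.exp (lam * t) / S t := by
    intro t
    have hx0 : xv t 0 = a + t := by simp [hxv]
    simp only [expMech, hS t, hx0, mul_add, Real.exp_add, hea]
  have hmechi : ∀ t (i : Fin d), i ≠ 0 → expMech lam (xv t) i = 1 / S t := by
    intro t i hi
    have hxi : xv t i = 0 := by simp [hxv, hi]
    simp only [expMech, hS t, hxi, mul_zero, Real.exp_zero]
  set f : ℝ → ℝ := fun t => 2 * (D * Real.exp (lam * t)) / S t with hf
  -- key ℓ1 computation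
  have hl1 : ∀ t, 0 < t → (∑ i, |expMech lam (xv t) i - expMech lam (xv 0) i|)
      = f t - f 0 := by
    intro t ht
    have hS0 : S 0 = 2 * D - 1 := by
      simp only [hSdef, mul_zero, Real.exp_zero, mul_one]
      ring
    have hSt := hSpos t
    have hS0' := hSpos 0
    have hexp1 : 1 ≤ Real.exp (lam * t) := Real.one_le_exp (by positivity)
    have hmono : S 0 ≤ S t := by
      simp only [hSdef, mul_zero, Real.exp_zero, mul_one]
      nlinarith
    have h0nonneg : 0 ≤ D * Real.exp (lam * t) / S t - D * Real.exp (lam * 0) / S 0 := by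
      rw [sub_nonneg, div_le_div_iff₀ hS0' hSt]
      simp only [hSdef, mul_zero, Real.exp_zero, mul_one]
      nlinarith [mul_nonneg (mul_nonneg (by linarith : (0:ℝ) ≤ D)
        (by linarith : (0:ℝ) ≤ D - 1)) (by linarith : (0:ℝ) ≤ Real.exp (lam * t) - 1)]
    have hinonpos : 1 / S t - 1 / S 0 ≤ 0 := by
      rw [sub_nonpos, div_le_div_iff₀ hSt hS0']
      linarith
    have hsplit : (∑ i, |expMech lam (xv t) i - expMech lam (xv 0) i|)
        = |expMech lam (xv t) 0 - expMech lam (xv 0) 0|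
          + ∑ i ∈ univ.erase 0, |expMech lam (xv t) i - expMech lam (xv 0) i| := by
      exact (Finset.add_sum_erase _ _ (Finset.mem_univ (0 : Fin d))).symm
    rw [hsplit]
    have hrest : ∑ i ∈ univ.erase (0 : Fin d), |expMech lam (xv t) i - expMech lam (xv 0) i|
        = (D - 1) * (1 / S 0 - 1 / S t) := by
      have : ∀ i ∈ univ.erase (0 : Fin d),
          |expMech lam (xv t) i - expMech lam (xv 0) i| = 1 / S 0 - 1 / S t := by
        intro i hi
        have hi0 : i ≠ 0 := Finset.ne_of_mem_erase hi
        rw [hmechi t i hi0, hmechi 0 i hi0, abs_of_nonpos hinonpos]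
        ring
      rw [Finset.sum_congr rfl this, Finset.sum_const, Finset.card_erase_of_mem (Finset.mem_univ _),
        Finset.card_univ, Fintype.card_fin, nsmul_eq_mul]
      have : ((d - 1 : ℕ) : ℝ) = D - 1 := by
        rw [hDdef]
        push_cast [Nat.cast_sub (by omega : 1 ≤ d)]
        ring
      rw [this]
    rw [hrest, hmech0, hmech0, abs_of_nonneg h0nonneg]
    simp only [hf]
    have hS0v : S 0 = 2 * D - 1 := hS0
    have hSt' : S t = D * Real.exp (lam * t) + (D - 1) := rfl
    field_simp
    rw [hS0v, hSt']
    simp only [mul_zero, Real.exp_zero]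
    ring
  -- pnorm computation
  have hpn : ∀ t, 0 < t → pnorm p (xv t - xv 0) = t := by
    intro t ht
    have hp0 : p ≠ 0 := by linarith
    have : ∀ i : Fin d, |(xv t - xv 0) i| ^ p = if i = 0 then t ^ p else 0 := by
      intro i
      simp only [Pi.sub_apply, hxv]
      split_ifs with h
      · rw [show a + t - (a + 0) = t by ring, abs_of_pos ht]
      · simp [Real.zero_rpow hp0]
    simp only [pnorm]
    rw [Finset.sum_congr rfl fun i _ => this i, Finset.sum_ite_eq' univ (0 : Fin d)]
    simp only [Finset.mem_univ, if_true]
    rw [← Real.rpow_mul (le_of_lt ht), mul_one_div, div_self hp0, Real.rpow_one]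
  -- the difference quotient bound
  have hquot : ∀ t, 0 < t → f t - f 0 ≤ c * t := by
    intro t ht
    have := hlip (xv t) (xv 0)
    rw [hl1 t ht, hpn t ht] at this
    exact this
  -- derivative of f at 0
  set L : ℝ := 2 * lam * (D * (D - 1)) / (2 * D - 1) ^ 2 with hL
  have hS0 : S 0 = 2 * D - 1 := by
    simp only [hSdef, mul_zero, Real.exp_zero, mul_one]
    ring
  have hS0ne : S 0 ≠ 0 := ne_of_gt (hSpos 0)
  have hder : HasDerivAt f L 0 := by
    have hexp : HasDerivAt (fun t : ℝ => Real.exp (lam * t)) lam 0 := by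
      have h1 : HasDerivAt (fun t : ℝ => lam * t) lam 0 := by
        simpa using (hasDerivAt_id (0:ℝ)).const_mul lam
      simpa using h1.exp
    have hN : HasDerivAt (fun t : ℝ => 2 * (D * Real.exp (lam * t))) (2 * (D * lam)) 0 := by
      exact (hexp.const_mul D).const_mul 2
    have hDen : HasDerivAt S (D * lam) 0 := by
      simpa [hSdef] using (hexp.const_mul D).add_const (D - 1)
    have := hN.div hDen hS0ne
    refine this.congr_deriv ?_
    rw [hL, hS0]
    have he0 : Real.exp (lam * 0) = 1 := by simp
    rw [he0]
    field_simp
    ring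
  -- pass to the limit along t → 0⁺
  have hLc : L ≤ c := by
    rw [hasDerivAt_iff_tendsto_slope] at hder
    have hmono : nhdsWithin (0:ℝ) (Set.Ioi 0) ≤ nhdsWithin (0:ℝ) {(0:ℝ)}ᶜ := by
      apply nhdsWithin_mono
      intro x hx
      exact ne_of_gt hx
    have htend := hder.mono_left hmono
    refine le_of_tendsto htend ?_
    filter_upwards [self_mem_nhdsWithin] with t ht
    have ht' : (0:ℝ) < t := ht
    rw [slope_def_field, div_le_iff₀ (by simpa using ht')]
    have := hquot t ht'
    linarith
  constructor
  · exact hLc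
  · have h9 : (0:ℝ) < (2 * D - 1) ^ 2 := by nlinarith
    have : 4 * lam / 9 ≤ L := by
      rw [hL, div_le_div_iff₀ (by norm_num) h9]
      nlinarith [mul_nonneg (mul_nonneg hlam.le (by linarith : (0:ℝ) ≤ D - 2))
        (by linarith : (0:ℝ) ≤ D + 1)]
    linarith
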